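/- Let X be a G-simplicial complex and R a set of resolution data for X such that the geometric realization of R(x) is contractible for every vertex x. Then the canonical map from the geometric realization of the resolution X[R] to the geometric realization of X (collapsing each R(x) to x) is a homotopy equivalence. -/

import Mathlib

/-- The geometric realization of an abstract simplicial complex `K` on the vertex type
`V`: convex combinations of vertices supported on a simplex of `K`, topologized as a
subspace of `V → ℝ`. -/
def Realization {V : Type*} (K : Set (Finset V)) : Type _ :=
  {f : V → ℝ // (∀ v, 0 ≤ f v) ∧ (∃ s ∈ K, Function.support f ⊆ ↑s) ∧ ∑ᶠ v, f v = 1}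

noncomputable instance {V : Type*} (K : Set (Finset V)) : TopologicalSpace (Realization K) :=
  inferInstanceAs (TopologicalSpace
    {f : V → ℝ // (∀ v, 0 ≤ f v) ∧ (∃ s ∈ K, Function.support f ⊆ ↑s) ∧ ∑ᶠ v, f v = 1})

open Function Filter Set Finset

section Aux

variable {W : Type*}

lemma finsum_mem_eq_sum_indicator (f : W → ℝ) {s : Finset W} (h : Function.support f ⊆ ↑s)
    (A : Set W) : ∑ᶠ w ∈ A, f w = ∑ w ∈ s, A.indicator f w := by
  rw [finsum_mem_def]
  exact finsum_eq_sum_of_support_subset _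
    (Subset.trans (by rw [Set.support_indicator]; exact Set.inter_subset_right) h)

lemma Realization.val_nonneg {K : Set (Finset W)} (f : Realization K) (w : W) : 0 ≤ f.val w :=
  f.2.1 w

lemma Realization.exists_simplex {K : Set (Finset W)} (f : Realization K) :
    ∃ s ∈ K, Function.support f.val ⊆ ↑s := f.2.2.1

lemma Realization.finsum_val {K : Set (Finset W)} (f : Realization K) : ∑ᶠ w, f.val w = 1 :=
  f.2.2.2

lemma Realization.val_le_one {K : Set (Finset W)} (f : Realization K) (w : W) : f.val w ≤ 1 := by
  obtain ⟨s, hsK, hs⟩ := f.exists_simplex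
  by_cases hw : f.val w = 0
  · rw [hw]; exact zero_le_one
  · have hws : w ∈ s := hs hw
    have h1 : f.val w ≤ ∑ v ∈ s, f.val v :=
      Finset.single_le_sum (fun i _ => f.val_nonneg i) hws
    rwa [← finsum_eq_sum_of_support_subset _ hs, f.finsum_val] at h1

lemma exists_of_finsum_mem_ne_zero {f : W → ℝ} {A : Set W} (h : (∑ᶠ w ∈ A, f w) ≠ 0) :
    ∃ w ∈ A, f w ≠ 0 := by
  by_contra hc
  push_neg at hc
  apply h
  rw [finsum_mem_def]
  have hz : A.indicator f = 0 := by
    funext w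
    by_cases hw : w ∈ A
    · simp [Set.indicator_of_mem hw, hc w hw]
    · simp [Set.indicator_of_notMem hw]
  rw [hz]
  exact finsum_zero

lemma finsum_mem_nonneg' {f : W → ℝ} (hf : ∀ w, 0 ≤ f w) (A : Set W) :
    0 ≤ ∑ᶠ w ∈ A, f w := by
  rw [finsum_mem_def]
  exact finsum_nonneg fun w => Set.indicator_nonneg (fun a _ => hf a) w

lemma le_finsum_mem {K : Set (Finset W)} (f : Realization K) {A : Set W} {w : W} (hw : w ∈ A) :
    f.val w ≤ ∑ᶠ w' ∈ A, f.val w' := by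
  obtain ⟨s, hsK, hs⟩ := f.exists_simplex
  rw [finsum_mem_eq_sum_indicator f.val hs A]
  by_cases h0 : f.val w = 0
  · rw [h0]
    exact Finset.sum_nonneg fun i _ => Set.indicator_nonneg (fun a _ => f.val_nonneg a) i
  · have hws : w ∈ s := hs h0
    have := Finset.single_le_sum (f := A.indicator f.val)
      (fun i _ => Set.indicator_nonneg (fun a _ => f.val_nonneg a) i) hws
    rwa [Set.indicator_of_mem hw] at this

lemma finsum_mem_of_support_subset' (f : W → ℝ) {A : Set W} (h : Function.support f ⊆ A) :
    ∑ᶠ w ∈ A, f w = ∑ᶠ w, f w := by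
  rw [finsum_mem_def]
  congr 1
  funext w
  by_cases hw : w ∈ A
  · simp [Set.indicator_of_mem hw]
  · simp only [Set.indicator_of_notMem hw]
    by_contra hne
    exact hw (h fun h0 => hne h0.symm)

lemma finsum_mem_const_mul {s : Finset W} (c : ℝ) (f : W → ℝ) (h : Function.support f ⊆ ↑s)
    (A : Set W) : ∑ᶠ w ∈ A, c * f w = c * ∑ᶠ w ∈ A, f w := by
  have h2 : Function.support (fun w => c * f w) ⊆ ↑s := fun w hw => by
    apply h; intro h0; apply hw; simp [Function.mem_support] at h0 ⊢; simp [h0]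
  rw [finsum_mem_eq_sum_indicator _ h2 A, finsum_mem_eq_sum_indicator f h A, Finset.mul_sum]
  refine Finset.sum_congr rfl fun w _ => ?_
  by_cases hw : w ∈ A
  · simp [Set.indicator_of_mem hw]
  · simp [Set.indicator_of_notMem hw]

end Aux

section Cont

variable {W : Type*}

/-- Partial sums of coordinates are continuous on a realization. -/
lemma continuous_finsum_mem (K : Set (Finset W)) (A : Set W) :
    Continuous fun f : Realization K => ∑ᶠ w ∈ A, f.val w := by
  classical
  rw [continuous_iff_continuousAt]
  intro f₀
  obtain ⟨s₀, hs₀K, hs₀⟩ := f₀.exists_simplex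
  rw [ContinuousAt, Metric.tendsto_nhds]
  intro ε hε
  set c : ℝ := (s₀.card : ℝ) with hc
  have hc0 : 0 ≤ c := by positivity
  set δ : ℝ := ε / (2 * c + 2) with hδdef
  have hδ : 0 < δ := by positivity
  have hev : ∀ᶠ f : Realization K in nhds f₀, ∀ w ∈ s₀, |f.val w - f₀.val w| < δ := by
    rw [Filter.eventually_all_finset]
    intro w _
    have hcont : Continuous fun f : Realization K => f.val w :=
      (continuous_apply w).comp continuous_subtype_val
    have := (hcont.tendsto f₀).eventually (eventually_abs_sub_lt (f₀.val w) hδ)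
    exact this
  filter_upwards [hev] with f hf
  obtain ⟨s, hsK, hs⟩ := f.exists_simplex
  set u : Finset W := s₀ ∪ s with hu
  have hsub₀ : Function.support f₀.val ⊆ ↑u := hs₀.trans (by simp [hu])
  have hsub : Function.support f.val ⊆ ↑u := hs.trans (by simp [hu])
  have h1 : ∑ᶠ w ∈ A, f.val w = ∑ w ∈ u, A.indicator f.val w :=
    finsum_mem_eq_sum_indicator _ hsub A
  have h2 : ∑ᶠ w ∈ A, f₀.val w = ∑ w ∈ u, A.indicator f₀.val w :=
    finsum_mem_eq_sum_indicator _ hsub₀ A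
  rw [Real.dist_eq, h1, h2, ← Finset.sum_sub_distrib]
  have hle : ∀ w ∈ u, |A.indicator f.val w - A.indicator f₀.val w| ≤
      (if w ∈ s₀ then |f.val w - f₀.val w| else f.val w) := by
    intro w _
    by_cases hwA : w ∈ A
    · by_cases hws₀ : w ∈ s₀
      · simp [Set.indicator_of_mem hwA, hws₀]
      · have : f₀.val w = 0 := by
          by_contra hne
          exact hws₀ (hs₀ hne)
        simp [Set.indicator_of_mem hwA, hws₀, this, abs_of_nonneg (f.val_nonneg w)]
    · by_cases hws₀ : w ∈ s₀ <;>
        simp [Set.indicator_of_notMem hwA, hws₀, f.val_nonneg w]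
  calc |∑ w ∈ u, (A.indicator f.val w - A.indicator f₀.val w)|
      ≤ ∑ w ∈ u, |A.indicator f.val w - A.indicator f₀.val w| := Finset.abs_sum_le_sum_abs _ _
    _ ≤ ∑ w ∈ u, (if w ∈ s₀ then |f.val w - f₀.val w| else f.val w) := Finset.sum_le_sum hle
    _ = ∑ w ∈ s₀, |f.val w - f₀.val w| + ∑ w ∈ u \ s₀, f.val w := by
        rw [← Finset.sum_sdiff (Finset.subset_union_left (s₂ := s)), add_comm]
        congr 1
        · refine Finset.sum_congr rfl fun w hw => ?_
          rw [if_pos hw]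
        · refine Finset.sum_congr rfl fun w hw => ?_
          rw [if_neg (Finset.mem_sdiff.1 hw).2]
    _ < ε := by
      have e1 : ∑ w ∈ s₀, |f.val w - f₀.val w| ≤ c * δ := by
        calc ∑ w ∈ s₀, |f.val w - f₀.val w| ≤ ∑ _w ∈ s₀, δ :=
              Finset.sum_le_sum fun w hw => le_of_lt (hf w hw)
          _ = c * δ := by rw [Finset.sum_const, hc]; simp [nsmul_eq_mul]
      have e2 : ∑ w ∈ u \ s₀, f.val w = 1 - ∑ w ∈ s₀, f.val w := by
        have : ∑ w ∈ u, f.val w = 1 := by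
          rw [← finsum_eq_sum_of_support_subset _ hsub]; exact f.finsum_val
        rw [eq_sub_iff_add_eq, Finset.sum_sdiff (Finset.subset_union_left (s₂ := s)), this]
      have e3 : (1 : ℝ) - ∑ w ∈ s₀, f.val w ≤ c * δ := by
        have h10 : ∑ w ∈ s₀, f₀.val w = 1 := by
          rw [← finsum_eq_sum_of_support_subset _ hs₀]; exact f₀.finsum_val
        have : ∑ w ∈ s₀, f₀.val w - ∑ w ∈ s₀, f.val w ≤ ∑ w ∈ s₀, |f.val w - f₀.val w| := by
          rw [← Finset.sum_sub_distrib]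
          refine Finset.sum_le_sum fun w hw => ?_
          rw [abs_sub_comm]
          exact le_abs_self _
        linarith
      have e4 : δ * (2 * c + 2) = ε := by
        rw [hδdef]; field_simp
      linarith
end Cont

section Pattern

lemma continuous_ite_mul {α : Type*} [TopologicalSpace α] {a u : α → ℝ}
    (ha : Continuous a) (ha0 : ∀ p, 0 ≤ a p)
    (hu : ∀ p, 0 < a p → ContinuousAt u p)
    (hu0 : ∀ p, 0 ≤ u p) (hu1 : ∀ p, u p ≤ 1) :
    Continuous fun p => if 0 < a p then a p * u p else 0 := by
  rw [continuous_iff_continuousAt]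
  intro p₀
  by_cases h : 0 < a p₀
  · have hopen : IsOpen {p | 0 < a p} := isOpen_lt continuous_const ha
    have hev : (fun p => a p * u p) =ᶠ[nhds p₀] fun p => if 0 < a p then a p * u p else 0 := by
      filter_upwards [hopen.mem_nhds h] with p hp
      simp [if_pos hp]
    exact ((ha.continuousAt.mul (hu p₀ h))).congr hev
  · have h0 : a p₀ = 0 := le_antisymm (not_lt.1 h) (ha0 p₀)
    have hval : (if 0 < a p₀ then a p₀ * u p₀ else 0) = 0 := by simp [h]
    rw [ContinuousAt, hval]
    apply squeeze_zero (g := a)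
    · intro p
      by_cases hp : 0 < a p
      · rw [if_pos hp]; exact mul_nonneg (le_of_lt hp) (hu0 p)
      · rw [if_neg hp]
    · intro p
      by_cases hp : 0 < a p
      · rw [if_pos hp]
        calc a p * u p ≤ a p * 1 := mul_le_mul_of_nonneg_left (hu1 p) (le_of_lt hp)
          _ = a p := mul_one _
      · rw [if_neg hp]; exact ha0 p
    · rw [← h0]; exact ha.continuousAt

end Pattern

set_option linter.unusedSectionVars false

section Main

variable {V W : Type*} [DecidableEq V] [DecidableEq W]
  (vtx : W → V) (X : Set (Finset V)) (R : V → Set (Finset W))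

/-- The resolution complex `X[R]`. -/
def Res : Set (Finset W) := {y | y.Nonempty ∧
  (∀ x : V, (y.filter fun w => vtx w = x).Nonempty →
    (y.filter fun w => vtx w = x) ∈ R x) ∧
  y.image vtx ∈ X}

lemma mem_Res {y : Finset W} : y ∈ Res vtx X R ↔
    (y.Nonempty ∧ (∀ x : V, (y.filter fun w => vtx w = x).Nonempty →
      (y.filter fun w => vtx w = x) ∈ R x) ∧ y.image vtx ∈ X) := Iff.rfl

lemma fiber_support (h : W → ℝ) {s : Finset W} (hs : Function.support h ⊆ ↑s) :
    Function.support (fun x => ∑ᶠ w ∈ {w | vtx w = x}, h w) ⊆ ↑(s.image vtx) := by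
  intro x hx
  obtain ⟨w, hw1, hw2⟩ := exists_of_finsum_mem_ne_zero hx
  simp only [Finset.coe_image, Set.mem_image]
  exact ⟨w, hs hw2, hw1⟩

lemma fiber_finsum (h : W → ℝ) {s : Finset W} (hs : Function.support h ⊆ ↑s) :
    ∑ᶠ x, ∑ᶠ w ∈ {w | vtx w = x}, h w = ∑ᶠ w, h w := by
  classical
  rw [finsum_eq_sum_of_support_subset _ (fiber_support vtx h hs),
      finsum_eq_sum_of_support_subset _ hs]
  have hcong : ∀ x ∈ s.image vtx,
      ∑ᶠ w ∈ {w | vtx w = x}, h w = ∑ w ∈ s, if vtx w = x then h w else 0 := by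
    intro x _
    rw [finsum_mem_eq_sum_indicator h hs]
    refine Finset.sum_congr rfl fun w _ => ?_
    by_cases hw : vtx w = x
    · rw [if_pos hw, Set.indicator_of_mem (show w ∈ {w | vtx w = x} from hw)]
    · rw [if_neg hw, Set.indicator_of_notMem (show w ∉ {w | vtx w = x} from hw)]
  rw [Finset.sum_congr rfl hcong, Finset.sum_comm]
  refine Finset.sum_congr rfl fun w hw => ?_
  rw [Finset.sum_ite_eq (s.image vtx) (vtx w) (fun _ => h w),
    if_pos (Finset.mem_image_of_mem vtx hw)]

lemma aF_mem (f : Realization (Res vtx X R)) :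
    (∀ x, 0 ≤ ∑ᶠ w ∈ {w | vtx w = x}, f.val w) ∧
    (∃ s ∈ X, Function.support (fun x => ∑ᶠ w ∈ {w | vtx w = x}, f.val w) ⊆ ↑s) ∧
    ∑ᶠ x, ∑ᶠ w ∈ {w | vtx w = x}, f.val w = 1 := by
  obtain ⟨s, hsK, hs⟩ := f.exists_simplex
  exact ⟨fun x => finsum_mem_nonneg' f.val_nonneg _,
    ⟨s.image vtx, hsK.2.2, fiber_support vtx f.val hs⟩,
    by rw [fiber_finsum vtx f.val hs]; exact f.finsum_val⟩

/-- The canonical map `|X[R]| → |X|`. -/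
noncomputable def piMap : C(Realization (Res vtx X R), Realization X) where
  toFun f := ⟨fun x => ∑ᶠ w ∈ {w | vtx w = x}, f.val w, aF_mem vtx X R f⟩
  continuous_toFun := by
    apply Continuous.subtype_mk
    exact continuous_pi fun x => continuous_finsum_mem _ _

lemma P_of_val_ne (f : Realization (Res vtx X R)) (w : W) (h : f.val w ≠ 0) :
    ∃ s ∈ X, vtx w ∈ s := by
  obtain ⟨s, hsK, hs⟩ := f.exists_simplex
  exact ⟨s.image vtx, hsK.2.2, Finset.mem_image_of_mem vtx (hs h)⟩

lemma P_of_aF_ne (f : Realization (Res vtx X R)) (x : V)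
    (h : ∑ᶠ w ∈ {w | vtx w = x}, f.val w ≠ 0) : ∃ s ∈ X, x ∈ s := by
  obtain ⟨w, hw1, hw2⟩ := exists_of_finsum_mem_ne_zero h
  have := P_of_val_ne vtx X R f w hw2
  rwa [show vtx w = x from hw1] at this

lemma val_eq_zero_of_aF (f : Realization (Res vtx X R)) (w : W)
    (h : ∑ᶠ w' ∈ {w' | vtx w' = vtx w}, f.val w' = 0) : f.val w = 0 := by
  have h1 : f.val w ≤ 0 := by
    have := le_finsum_mem f (A := {w' | vtx w' = vtx w}) (w := w) rfl
    rwa [h] at this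
  exact le_antisymm h1 (f.val_nonneg w)

lemma val_fiber {x : V} (hRfib : ∀ x, ∀ s ∈ R x, ∀ w ∈ s, vtx w = x)
    (q : Realization (R x)) {w : W} (h : q.val w ≠ 0) : vtx w = x := by
  obtain ⟨t, ht, hsupp⟩ := q.exists_simplex
  exact hRfib x t ht w (hsupp h)

lemma fiber_sum_one {x : V} (hRfib : ∀ x, ∀ s ∈ R x, ∀ w ∈ s, vtx w = x)
    (q : Realization (R x)) : ∑ᶠ w ∈ {w | vtx w = x}, q.val w = 1 := by
  exact (finsum_mem_of_support_subset' q.val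
    (fun w hw => val_fiber vtx R hRfib q hw)).trans q.finsum_val

lemma ybuild (hXcplx : ∀ s ∈ X, s.Nonempty ∧ ∀ t ⊆ s, t.Nonempty → t ∈ X)
    (hRcplx : ∀ x, ∀ s ∈ R x, s.Nonempty ∧ ∀ t ⊆ s, t.Nonempty → t ∈ R x)
    (hRfib : ∀ x, ∀ s ∈ R x, ∀ w ∈ s, vtx w = x)
    {sx : Finset V} (hsx : sx ∈ X) (r : ∀ x, x ∈ sx → Realization (R x)) :
    ∃ y ∈ Res vtx X R, ∀ x (hx : x ∈ sx), ∀ w, (r x hx).val w ≠ 0 → w ∈ y := by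
  classical
  choose T hT1 hT2 using fun x : {x // x ∈ sx} => (r x.1 x.2).exists_simplex
  refine ⟨sx.attach.biUnion (fun x => T x), ?_, ?_⟩
  · have hvT : ∀ (x : {x // x ∈ sx}) w, w ∈ T x → vtx w = x.1 :=
      fun x w hw => hRfib x.1 _ (hT1 x) w hw
    have himg : (sx.attach.biUnion fun x => T x).image vtx = sx := by
      apply Finset.Subset.antisymm
      · intro v hv
        simp only [Finset.mem_image, Finset.mem_biUnion, Finset.mem_attach, true_and] at hv
        obtain ⟨w, ⟨x, hwT⟩, rfl⟩ := hv
        rw [hvT x w hwT]; exact x.2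
      · intro v hv
        obtain ⟨w, hw⟩ := (hRcplx v _ (hT1 ⟨v, hv⟩)).1
        exact Finset.mem_image.2 ⟨w, Finset.mem_biUnion.2 ⟨⟨v, hv⟩, Finset.mem_attach _ _, hw⟩,
          hvT ⟨v, hv⟩ w hw⟩
    refine ⟨?_, ?_, by rw [himg]; exact hsx⟩
    · obtain ⟨v, hv⟩ := (hXcplx sx hsx).1
      obtain ⟨w, hw⟩ := (hRcplx v _ (hT1 ⟨v, hv⟩)).1
      exact ⟨w, Finset.mem_biUnion.2 ⟨⟨v, hv⟩, Finset.mem_attach _ _, hw⟩⟩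
    · intro x hne
      obtain ⟨w0, hw0⟩ := hne
      have hw0' := Finset.mem_filter.1 hw0
      obtain ⟨x', _, hwT'⟩ := Finset.mem_biUnion.1 hw0'.1
      have hx : x ∈ sx := by rw [← hw0'.2, hvT x' w0 hwT']; exact x'.2
      have heq : (sx.attach.biUnion fun x => T x).filter (fun w => vtx w = x) = T ⟨x, hx⟩ := by
        apply Finset.Subset.antisymm
        · intro w hw
          have hw' := Finset.mem_filter.1 hw
          obtain ⟨x'', _, hwT''⟩ := Finset.mem_biUnion.1 hw'.1
          have hxx : x'' = ⟨x, hx⟩ := Subtype.ext (by rw [← hvT x'' w hwT'', hw'.2])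
          rwa [← hxx]
        · intro w hw
          exact Finset.mem_filter.2 ⟨Finset.mem_biUnion.2 ⟨⟨x, hx⟩, Finset.mem_attach _ _, hw⟩,
            hvT ⟨x, hx⟩ w hw⟩
      rw [heq]; exact hT1 ⟨x, hx⟩
  · intro x hx w hne
    exact Finset.mem_biUnion.2 ⟨⟨x, hx⟩, Finset.mem_attach _ _,
      Finset.mem_coe.1 (hT2 ⟨x, hx⟩ hne)⟩

end Main

section Sigma

variable {V W : Type*} [DecidableEq V] [DecidableEq W]
  (vtx : W → V) (X : Set (Finset V)) (R : V → Set (Finset W))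
  (p : ∀ x : V, (∃ s ∈ X, x ∈ s) → Realization (R x))

open Classical in
/-- The homotopy inverse, pointwise. -/
noncomputable def sigmaVal (g : Realization X) (w : W) : ℝ :=
  if h : ∃ s ∈ X, vtx w ∈ s then g.val (vtx w) * (p (vtx w) h).val w else 0

lemma sigmaVal_nonneg (g : Realization X) (w : W) : 0 ≤ sigmaVal vtx X R p g w := by
  unfold sigmaVal
  by_cases h : ∃ s ∈ X, vtx w ∈ s
  · rw [dif_pos h]; exact mul_nonneg (g.val_nonneg _) ((p (vtx w) h).val_nonneg w)
  · rw [dif_neg h]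

lemma sigma_fiber (hRfib : ∀ x, ∀ s ∈ R x, ∀ w ∈ s, vtx w = x) (g : Realization X) (x : V) :
    ∑ᶠ w ∈ {w | vtx w = x}, sigmaVal vtx X R p g w = g.val x := by
  by_cases hP : ∃ s ∈ X, x ∈ s
  · have hcong : ∀ w ∈ {w | vtx w = x},
        sigmaVal vtx X R p g w = g.val x * (p x hP).val w := by
      intro w hw
      have hw' : vtx w = x := hw
      subst hw'
      unfold sigmaVal
      rw [dif_pos hP]
    rw [finsum_mem_congr rfl hcong]
    obtain ⟨t, ht1, ht2⟩ := (p x hP).exists_simplex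
    rw [finsum_mem_const_mul (s := t) _ _ ht2, fiber_sum_one vtx R hRfib (p x hP), mul_one]
  · have hg0 : g.val x = 0 := by
      by_contra hne
      obtain ⟨s, hs1, hs2⟩ := g.exists_simplex
      exact hP ⟨s, hs1, hs2 hne⟩
    have hcong : ∀ w ∈ {w | vtx w = x}, sigmaVal vtx X R p g w = 0 := by
      intro w hw
      have hw' : vtx w = x := hw
      unfold sigmaVal
      rw [dif_neg (by rw [hw']; exact hP)]
    rw [finsum_mem_congr rfl hcong, hg0]
    simp

lemma sigma_mem (hXcplx : ∀ s ∈ X, s.Nonempty ∧ ∀ t ⊆ s, t.Nonempty → t ∈ X)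
    (hRcplx : ∀ x, ∀ s ∈ R x, s.Nonempty ∧ ∀ t ⊆ s, t.Nonempty → t ∈ R x)
    (hRfib : ∀ x, ∀ s ∈ R x, ∀ w ∈ s, vtx w = x) (g : Realization X) :
    (∀ w, 0 ≤ sigmaVal vtx X R p g w) ∧
    (∃ y ∈ Res vtx X R, Function.support (sigmaVal vtx X R p g) ⊆ ↑y) ∧
    ∑ᶠ w, sigmaVal vtx X R p g w = 1 := by
  obtain ⟨s, hs1, hs2⟩ := g.exists_simplex
  obtain ⟨y, hy1, hy2⟩ := ybuild vtx X R hXcplx hRcplx hRfib hs1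
    (fun x hx => p x ⟨s, hs1, hx⟩)
  have hsupp : Function.support (sigmaVal vtx X R p g) ⊆ ↑y := by
    intro w hw
    unfold sigmaVal at hw
    simp only [Function.mem_support] at hw
    by_cases h : ∃ s' ∈ X, vtx w ∈ s'
    · rw [dif_pos h] at hw
      have hg : g.val (vtx w) ≠ 0 := fun h0 => hw (by rw [h0, zero_mul])
      have hpw : (p (vtx w) h).val w ≠ 0 := fun h0 => hw (by rw [h0, mul_zero])
      have hx : vtx w ∈ s := hs2 hg
      exact hy2 (vtx w) hx w hpw
    · rw [dif_neg h] at hw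
      exact absurd rfl hw
  refine ⟨sigmaVal_nonneg vtx X R p g, ⟨y, hy1, hsupp⟩, ?_⟩
  obtain ⟨yf, -⟩ := hy1
  rw [← fiber_finsum vtx _ hsupp]
  calc ∑ᶠ x, ∑ᶠ w ∈ {w | vtx w = x}, sigmaVal vtx X R p g w
      = ∑ᶠ x, g.val x := finsum_congr fun x => sigma_fiber vtx X R p hRfib g x
    _ = 1 := g.finsum_val

/-- The homotopy inverse `|X| → |X[R]|`. -/
noncomputable def sigmaMap (hXcplx : ∀ s ∈ X, s.Nonempty ∧ ∀ t ⊆ s, t.Nonempty → t ∈ X)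
    (hRcplx : ∀ x, ∀ s ∈ R x, s.Nonempty ∧ ∀ t ⊆ s, t.Nonempty → t ∈ R x)
    (hRfib : ∀ x, ∀ s ∈ R x, ∀ w ∈ s, vtx w = x) :
    C(Realization X, Realization (Res vtx X R)) where
  toFun g := ⟨sigmaVal vtx X R p g, sigma_mem vtx X R p hXcplx hRcplx hRfib g⟩
  continuous_toFun := by
    apply Continuous.subtype_mk
    apply continuous_pi
    intro w
    by_cases h : ∃ s ∈ X, vtx w ∈ s
    · have : (fun g : Realization X => sigmaVal vtx X R p g w) =
          fun g : Realization X => g.val (vtx w) * (p (vtx w) h).val w := by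
        funext g; unfold sigmaVal; rw [dif_pos h]
      rw [this]
      exact (((continuous_apply (vtx w)).comp continuous_subtype_val).mul continuous_const)
    · have : (fun g : Realization X => sigmaVal vtx X R p g w) = fun _ => 0 := by
        funext g; unfold sigmaVal; rw [dif_neg h]
      rw [this]
      exact continuous_const

end Sigma

section H

variable {V W : Type*} [DecidableEq V] [DecidableEq W]
  (vtx : W → V) (X : Set (Finset V)) (R : V → Set (Finset W))
  (p : ∀ x : V, (∃ s ∈ X, x ∈ s) → Realization (R x))

noncomputable def aRaw (f : Realization (Res vtx X R)) (x : V) : ℝ :=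
  ∑ᶠ w ∈ {w | vtx w = x}, f.val w

lemma aRaw_nonneg (f : Realization (Res vtx X R)) (x : V) : 0 ≤ aRaw vtx X R f x :=
  finsum_mem_nonneg' f.val_nonneg _

lemma aRaw_continuous (x : V) : Continuous fun f : Realization (Res vtx X R) =>
    aRaw vtx X R f x := continuous_finsum_mem _ _

lemma normalized_mem (f : Realization (Res vtx X R)) (x : V) (h2 : 0 < aRaw vtx X R f x) :
    (∀ w, 0 ≤ (fun w => if vtx w = x then f.val w / aRaw vtx X R f x else 0) w) ∧
    (∃ t ∈ R x, Function.support
      (fun w => if vtx w = x then f.val w / aRaw vtx X R f x else 0) ⊆ ↑t) ∧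
    ∑ᶠ w, (if vtx w = x then f.val w / aRaw vtx X R f x else 0) = 1 := by
  classical
  obtain ⟨s, hsK, hs⟩ := f.exists_simplex
  have hane : aRaw vtx X R f x ≠ 0 := ne_of_gt h2
  have hfilter : (s.filter fun w => vtx w = x) ∈ R x := by
    apply hsK.2.1
    obtain ⟨w, hw1, hw2⟩ := exists_of_finsum_mem_ne_zero hane
    exact ⟨w, Finset.mem_filter.2 ⟨hs hw2, hw1⟩⟩
  have hsupp : Function.support (fun w => if vtx w = x then f.val w / aRaw vtx X R f x else 0)
      ⊆ ↑(s.filter fun w => vtx w = x) := by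
    intro w hw
    simp only [Function.mem_support] at hw
    by_cases hvw : vtx w = x
    · rw [if_pos hvw] at hw
      have hfw : f.val w ≠ 0 := fun h0 => hw (by rw [h0, zero_div])
      exact Finset.mem_coe.2 (Finset.mem_filter.2 ⟨hs hfw, hvw⟩)
    · rw [if_neg hvw] at hw; exact absurd rfl hw
  refine ⟨?_, ⟨_, hfilter, hsupp⟩, ?_⟩
  · intro w
    show 0 ≤ (if vtx w = x then f.val w / aRaw vtx X R f x else 0)
    by_cases hvw : vtx w = x
    · rw [if_pos hvw]; exact div_nonneg (f.val_nonneg w) (le_of_lt h2)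
    · rw [if_neg hvw]
  · have heq : (fun w => if vtx w = x then f.val w / aRaw vtx X R f x else 0) =
        Set.indicator {w | vtx w = x} (fun w => (aRaw vtx X R f x)⁻¹ * f.val w) := by
      funext w
      by_cases hvw : vtx w = x
      · rw [if_pos hvw, Set.indicator_of_mem (show w ∈ {w | vtx w = x} from hvw),
          div_eq_inv_mul]
      · rw [if_neg hvw, Set.indicator_of_notMem (show w ∉ {w | vtx w = x} from hvw)]
    rw [heq, ← finsum_mem_def, finsum_mem_const_mul (s := s) _ _ hs]
    exact inv_mul_cancel₀ hane

open Classical in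
/-- The normalized restriction of `f` to the fiber over `x` (with junk value `p x h`). -/
noncomputable def Qx (f : Realization (Res vtx X R)) (x : V) (h : ∃ s ∈ X, x ∈ s) :
    Realization (R x) :=
  if h2 : 0 < aRaw vtx X R f x then
    ⟨fun w => if vtx w = x then f.val w / aRaw vtx X R f x else 0,
      normalized_mem vtx X R f x h2⟩
  else p x h

variable (D : ∀ x (h : ∃ s ∈ X, x ∈ s),
  C(unitInterval × Realization (R x), Realization (R x)))

open Classical in
/-- The fiberwise contraction homotopy, pointwise. -/
noncomputable def Hval (z : Realization (Res vtx X R) × unitInterval) (w : W) : ℝ :=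
  if h : ∃ s ∈ X, vtx w ∈ s then
    (if 0 < aRaw vtx X R z.1 (vtx w) then
      aRaw vtx X R z.1 (vtx w) * (D (vtx w) h (z.2, Qx vtx X R p z.1 (vtx w) h)).val w
    else 0)
  else 0

lemma Hval_nonneg (z : Realization (Res vtx X R) × unitInterval) (w : W) :
    0 ≤ Hval vtx X R p D z w := by
  unfold Hval
  by_cases h : ∃ s ∈ X, vtx w ∈ s
  · rw [dif_pos h]
    by_cases h2 : 0 < aRaw vtx X R z.1 (vtx w)
    · rw [if_pos h2]
      exact mul_nonneg (le_of_lt h2) (Realization.val_nonneg _ w)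
    · rw [if_neg h2]
  · rw [dif_neg h]

lemma H_fiber (hRfib : ∀ x, ∀ s ∈ R x, ∀ w ∈ s, vtx w = x)
    (z : Realization (Res vtx X R) × unitInterval) (x : V) :
    ∑ᶠ w ∈ {w | vtx w = x}, Hval vtx X R p D z w = aRaw vtx X R z.1 x := by
  by_cases hP : ∃ s ∈ X, x ∈ s
  · by_cases h2 : 0 < aRaw vtx X R z.1 x
    · have hcong : ∀ w ∈ {w | vtx w = x}, Hval vtx X R p D z w =
          aRaw vtx X R z.1 x * (D x hP (z.2, Qx vtx X R p z.1 x hP)).val w := by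
        intro w hw
        have hw' : vtx w = x := hw
        subst hw'
        unfold Hval
        rw [dif_pos hP, if_pos h2]
      rw [finsum_mem_congr rfl hcong]
      obtain ⟨t, ht1, ht2⟩ := (D x hP (z.2, Qx vtx X R p z.1 x hP)).exists_simplex
      rw [finsum_mem_const_mul (s := t) _ _ ht2, fiber_sum_one vtx R hRfib, mul_one]
    · have ha0 : aRaw vtx X R z.1 x = 0 :=
        le_antisymm (not_lt.1 h2) (aRaw_nonneg vtx X R z.1 x)
      have hcong : ∀ w ∈ {w | vtx w = x}, Hval vtx X R p D z w = 0 := by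
        intro w hw
        have hw' : vtx w = x := hw
        subst hw'
        unfold Hval
        rw [dif_pos hP, if_neg h2]
      rw [finsum_mem_congr rfl hcong, ha0]
      simp
  · have ha0 : aRaw vtx X R z.1 x = 0 := by
      by_contra hne
      exact hP (P_of_aF_ne vtx X R z.1 x hne)
    have hcong : ∀ w ∈ {w | vtx w = x}, Hval vtx X R p D z w = 0 := by
      intro w hw
      have hw' : vtx w = x := hw
      subst hw'
      unfold Hval
      rw [dif_neg hP]
    rw [finsum_mem_congr rfl hcong, ha0]
    simp

lemma Hval_mem (hXcplx : ∀ s ∈ X, s.Nonempty ∧ ∀ t ⊆ s, t.Nonempty → t ∈ X)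
    (hRcplx : ∀ x, ∀ s ∈ R x, s.Nonempty ∧ ∀ t ⊆ s, t.Nonempty → t ∈ R x)
    (hRfib : ∀ x, ∀ s ∈ R x, ∀ w ∈ s, vtx w = x)
    (z : Realization (Res vtx X R) × unitInterval) :
    (∀ w, 0 ≤ Hval vtx X R p D z w) ∧
    (∃ y ∈ Res vtx X R, Function.support (Hval vtx X R p D z) ⊆ ↑y) ∧
    ∑ᶠ w, Hval vtx X R p D z w = 1 := by
  obtain ⟨s, hsK, hs⟩ := z.1.exists_simplex
  have himg : s.image vtx ∈ X := hsK.2.2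
  obtain ⟨y, hy1, hy2⟩ := ybuild vtx X R hXcplx hRcplx hRfib himg
    (fun x hx => D x ⟨s.image vtx, himg, hx⟩ (z.2, Qx vtx X R p z.1 x ⟨s.image vtx, himg, hx⟩))
  have hsupp : Function.support (Hval vtx X R p D z) ⊆ ↑y := by
    intro w hw
    simp only [Function.mem_support] at hw
    unfold Hval at hw
    by_cases h : ∃ s' ∈ X, vtx w ∈ s'
    · rw [dif_pos h] at hw
      by_cases h2 : 0 < aRaw vtx X R z.1 (vtx w)
      · rw [if_pos h2] at hw
        have hD : (D (vtx w) h (z.2, Qx vtx X R p z.1 (vtx w) h)).val w ≠ 0 :=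
          fun h0 => hw (by rw [h0, mul_zero])
        have hx : vtx w ∈ s.image vtx := by
          obtain ⟨w', hw1, hw2⟩ := exists_of_finsum_mem_ne_zero (ne_of_gt h2)
          rw [← (show vtx w' = vtx w from hw1)]
          exact Finset.mem_image_of_mem vtx (hs hw2)
        exact hy2 (vtx w) hx w hD
      · rw [if_neg h2] at hw; exact absurd rfl hw
    · rw [dif_neg h] at hw; exact absurd rfl hw
  refine ⟨Hval_nonneg vtx X R p D z, ⟨y, hy1, hsupp⟩, ?_⟩
  rw [← fiber_finsum vtx _ hsupp]
  calc ∑ᶠ x, ∑ᶠ w ∈ {w | vtx w = x}, Hval vtx X R p D z w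
      = ∑ᶠ x, aRaw vtx X R z.1 x := finsum_congr fun x => H_fiber vtx X R p D hRfib z x
    _ = 1 := (aF_mem vtx X R z.1).2.2

open Classical in
lemma Hval_zero (hD0 : ∀ x h q, D x h (0, q) = q) (f : Realization (Res vtx X R)) :
    Hval vtx X R p D (f, 0) = f.val := by
  funext w
  show (if h : ∃ s ∈ X, vtx w ∈ s then
    (if 0 < aRaw vtx X R f (vtx w) then
      aRaw vtx X R f (vtx w) * (D (vtx w) h (0, Qx vtx X R p f (vtx w) h)).val w
    else 0) else 0) = f.val w
  by_cases h : ∃ s ∈ X, vtx w ∈ s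
  · rw [dif_pos h]
    by_cases h2 : 0 < aRaw vtx X R f (vtx w)
    · rw [if_pos h2, hD0]
      rw [show Qx vtx X R p f (vtx w) h = ⟨_, normalized_mem vtx X R f (vtx w) h2⟩ by
        exact dif_pos h2]
      show aRaw vtx X R f (vtx w) *
        (if vtx w = vtx w then f.val w / aRaw vtx X R f (vtx w) else 0) = f.val w
      rw [if_pos rfl, mul_comm, div_mul_cancel₀ _ (ne_of_gt h2)]
    · rw [if_neg h2]
      have ha0 : aRaw vtx X R f (vtx w) = 0 :=
        le_antisymm (not_lt.1 h2) (aRaw_nonneg vtx X R f (vtx w))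
      exact (val_eq_zero_of_aF vtx X R f w ha0).symm
  · rw [dif_neg h]
    have hval : f.val w = 0 := by
      by_contra hne
      exact h (P_of_val_ne vtx X R f w hne)
    rw [hval]

open Classical in
lemma Hval_one (hD1 : ∀ x h q, D x h (1, q) = p x h) (f : Realization (Res vtx X R)) :
    Hval vtx X R p D (f, 1) = sigmaVal vtx X R p (piMap vtx X R f) := by
  funext w
  show (if h : ∃ s ∈ X, vtx w ∈ s then
    (if 0 < aRaw vtx X R f (vtx w) then
      aRaw vtx X R f (vtx w) * (D (vtx w) h (1, Qx vtx X R p f (vtx w) h)).val w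
    else 0) else 0) = sigmaVal vtx X R p (piMap vtx X R f) w
  unfold sigmaVal
  by_cases h : ∃ s ∈ X, vtx w ∈ s
  · rw [dif_pos h, dif_pos h]
    have hpi : (piMap vtx X R f).val (vtx w) = aRaw vtx X R f (vtx w) := rfl
    by_cases h2 : 0 < aRaw vtx X R f (vtx w)
    · rw [if_pos h2, hD1, hpi]
    · rw [if_neg h2]
      have ha0 : aRaw vtx X R f (vtx w) = 0 :=
        le_antisymm (not_lt.1 h2) (aRaw_nonneg vtx X R f (vtx w))
      rw [hpi, ha0, zero_mul]
  · rw [dif_neg h, dif_neg h]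

lemma Hval_continuous (hXcplx : ∀ s ∈ X, s.Nonempty ∧ ∀ t ⊆ s, t.Nonempty → t ∈ X)
    (hRcplx : ∀ x, ∀ s ∈ R x, s.Nonempty ∧ ∀ t ⊆ s, t.Nonempty → t ∈ R x)
    (hRfib : ∀ x, ∀ s ∈ R x, ∀ w ∈ s, vtx w = x) :
    Continuous fun z => (⟨Hval vtx X R p D z,
      Hval_mem vtx X R p D hXcplx hRcplx hRfib z⟩ : Realization (Res vtx X R)) := by
  apply Continuous.subtype_mk
  apply continuous_pi
  intro w
  by_cases h : ∃ s ∈ X, vtx w ∈ s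
  · have hfe : (fun z => Hval vtx X R p D z w) = fun z =>
        if 0 < aRaw vtx X R z.1 (vtx w) then
          aRaw vtx X R z.1 (vtx w) * (D (vtx w) h (z.2, Qx vtx X R p z.1 (vtx w) h)).val w
        else 0 := by
      funext z; unfold Hval; rw [dif_pos h]
    rw [hfe]
    have hacont : Continuous fun z : Realization (Res vtx X R) × unitInterval =>
        aRaw vtx X R z.1 (vtx w) := (aRaw_continuous vtx X R (vtx w)).comp continuous_fst
    apply continuous_ite_mul hacont (fun z => aRaw_nonneg vtx X R z.1 (vtx w))
      ?_ (fun z => Realization.val_nonneg _ w) (fun z => Realization.val_le_one _ w)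
    intro z0 hz0
    have hQ : ContinuousAt (fun z : Realization (Res vtx X R) × unitInterval =>
        Qx vtx X R p z.1 (vtx w) h) z0 := by
      have hind : Topology.IsInducing
          (Subtype.val : Realization (R (vtx w)) → (W → ℝ)) := ⟨rfl⟩
      refine (Topology.IsInducing.continuousAt_iff hind
        (f := fun z : Realization (Res vtx X R) × unitInterval =>
          Qx vtx X R p z.1 (vtx w) h)).2 ?_
      apply continuousAt_pi'
      intro w'
      have hopen : IsOpen {z : Realization (Res vtx X R) × unitInterval |
          0 < aRaw vtx X R z.1 (vtx w)} := isOpen_lt continuous_const hacont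
      have hev : (fun z : Realization (Res vtx X R) × unitInterval =>
            if vtx w' = vtx w then z.1.val w' / aRaw vtx X R z.1 (vtx w) else 0)
          =ᶠ[nhds z0] fun z => (Qx vtx X R p z.1 (vtx w) h).val w' := by
        filter_upwards [hopen.mem_nhds hz0] with z hz
        rw [show Qx vtx X R p z.1 (vtx w) h = ⟨_, normalized_mem vtx X R z.1 (vtx w) hz⟩ by
          exact dif_pos hz]
      refine ContinuousAt.congr ?_ hev
      by_cases hww : vtx w' = vtx w
      · simp only [if_pos hww]
        exact (((continuous_apply w').comp
          (continuous_subtype_val.comp continuous_fst)).continuousAt).div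
          hacont.continuousAt (ne_of_gt hz0)
      · simp only [if_neg hww]; exact continuousAt_const
    have hpair : ContinuousAt (fun z : Realization (Res vtx X R) × unitInterval =>
        (z.2, Qx vtx X R p z.1 (vtx w) h)) z0 := continuous_snd.continuousAt.prodMk hQ
    have hDc := ((D (vtx w) h).continuous.continuousAt).comp hpair
    exact (((continuous_apply w).comp continuous_subtype_val).continuousAt).comp hDc
  · have hfe : (fun z => Hval vtx X R p D z w) = fun _ => (0:ℝ) := by
      funext z; unfold Hval; rw [dif_neg h]
    rw [hfe]; exact continuous_const

end H


/-- Let `X` be a `G`-simplicial complex (simplices fixed setwise are fixed pointwise)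
and `R` a set of resolution data for `X` — a family of simplicial complexes `R x`
indexed by the vertices `x` of `X`, with pairwise disjoint vertex sets (modelled by the
equivariant map `vtx : W → V`), compatible with the `G`-action — such that the geometric
realization of `R x` is contractible for every vertex `x`.  Then the canonical map from
the geometric realization of the resolution `X[R]` to the geometric realization of `X`
(collapsing each `R x` to `x`, i.e. pushing coordinates forward along `vtx`) is a
homotopy equivalence. -/
theorem stmt_11 {V W : Type*} [DecidableEq V] [DecidableEq W]
    (Γ : Type*) [Group Γ] [MulAction Γ V] [MulAction Γ W]
    (X : Set (Finset V)) (R : V → Set (Finset W)) (vtx : W → V)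
    -- simplicial complex axioms
    (hXcplx : ∀ s ∈ X, s.Nonempty ∧ ∀ t ⊆ s, t.Nonempty → t ∈ X)
    (hRcplx : ∀ x, ∀ s ∈ R x, s.Nonempty ∧ ∀ t ⊆ s, t.Nonempty → t ∈ R x)
    (hRfib : ∀ x, ∀ s ∈ R x, ∀ w ∈ s, vtx w = x)
    -- the `G`-simplicial complex conditions
    (hXinv : ∀ g : Γ, ∀ s ∈ X, s.image (g • ·) ∈ X)
    (hXfix : ∀ g : Γ, ∀ s ∈ X, s.image (g • ·) = s → ∀ v ∈ s, g • v = v)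
    (hvtx : ∀ (g : Γ) (w : W), vtx (g • w) = g • vtx w)
    (hRinv : ∀ (g : Γ) (x : V), ∀ s ∈ R x, s.image (g • ·) ∈ R (g • x))
    (hRfix : ∀ (g : Γ) (x : V), ∀ s ∈ R x, s.image (g • ·) = s → ∀ w ∈ s, g • w = w)
    -- contractibility of the resolving complexes
    (hcontr : ∀ x : V, (∃ s ∈ X, x ∈ s) → ContractibleSpace (Realization (R x)))
    -- the resolution `X[R]`
    (XR : Set (Finset W))
    (hXR : XR = {y | y.Nonempty ∧
      (∀ x : V, (y.filter fun w => vtx w = x).Nonempty →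
        (y.filter fun w => vtx w = x) ∈ R x) ∧
      y.image vtx ∈ X}) :
    ∃ he : ContinuousMap.HomotopyEquiv (Realization XR) (Realization X),
      ∀ (f : Realization XR) (x : V),
        (he.toFun f).val x = ∑ᶠ w ∈ {w | vtx w = x}, f.val w := by
  have hres : XR = Res vtx X R := hXR
  subst hres
  have hchoice : ∀ x : V, (∃ s ∈ X, x ∈ s) → ∃ (pp : Realization (R x))
      (DD : C(unitInterval × Realization (R x), Realization (R x))),
      (∀ q, DD (0, q) = q) ∧ (∀ q, DD (1, q) = pp) := by
    intro x hx
    haveI := hcontr x hx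
    obtain ⟨pp, hnull⟩ := id_nullhomotopic (Realization (R x))
    obtain ⟨Hh⟩ := hnull
    refine ⟨pp, Hh.toContinuousMap, fun q => ?_, fun q => ?_⟩
    · simpa using Hh.apply_zero q
    · simpa using Hh.apply_one q
  choose p D hD0 hD1 using hchoice
  refine ⟨⟨piMap vtx X R, sigmaMap vtx X R p hXcplx hRcplx hRfib, ?_, ?_⟩, fun f x => rfl⟩
  · -- left inverse up to homotopy, via the fiberwise contraction
    have F : (ContinuousMap.id (Realization (Res vtx X R))).Homotopy
        ((sigmaMap vtx X R p hXcplx hRcplx hRfib).comp (piMap vtx X R)) :=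
      { toContinuousMap := ⟨fun z => ⟨Hval vtx X R p D (z.2, z.1),
          Hval_mem vtx X R p D hXcplx hRcplx hRfib (z.2, z.1)⟩,
          (Hval_continuous vtx X R p D hXcplx hRcplx hRfib).comp continuous_swap⟩
        map_zero_left := fun f => Subtype.ext (Hval_zero vtx X R p D hD0 f)
        map_one_left := fun f => Subtype.ext (Hval_one vtx X R p D hD1 f) }
    exact ⟨F.symm⟩
  · -- exact right inverse
    have hcomp : (piMap vtx X R).comp (sigmaMap vtx X R p hXcplx hRcplx hRfib) =
        ContinuousMap.id (Realization X) :=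
      ContinuousMap.ext fun g => Subtype.ext (funext fun x =>
        sigma_fiber vtx X R p hRfib g x)
    rw [hcomp]
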